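/- Let n, m ≥ 2 and let F : ℝ₊ⁿ → Sₘ be continuously differentiable and monotonically non-increasing. Let x ∈ ℝ₊ⁿ be such that F'(x)((n−1)e_j' − e_j) ⋠ 0 for all j ∈ {1,…,n}, and set λ := min over j ∈ {1,…,n} of λ_max(F'(x)((n−1)e_j' − e_j)). Then for every d ∈ ℝⁿ: if λ_max(F'(x)d) < λ‖d‖∞/(n−1), then min_{j=1,…,n} d_j > −(1/(n−1)) · max_{j=1,…,n} d_j. -/

import Mathlib

attribute [local instance] Matrix.frobeniusNormedAddCommGroup Matrix.frobeniusNormedSpace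

noncomputable section

/-- The open positive orthant `ℝ₊ⁿ` in `ℝⁿ`. -/
def posOrth (n : ℕ) : Set (Fin n → ℝ) := {x | ∀ i, 0 < x i}

/-- The Loewner order on real matrices: `A ⪯ B` iff `B - A` is positive semidefinite. -/
def loewnerLE {m : ℕ} (A B : Matrix (Fin m) (Fin m) ℝ) : Prop := (B - A).PosSemidef

/-- The largest eigenvalue `λ_max` of a real (symmetric) matrix. -/
noncomputable def lambdaMax {m : ℕ} (A : Matrix (Fin m) (Fin m) ℝ) : ℝ :=
  sSup {r : ℝ | ∃ v : Fin m → ℝ, v ≠ 0 ∧ A.mulVec v = r • v}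

/-- The spectral norm `‖·‖₂` of a real matrix (operator norm on Euclidean space). -/
noncomputable def spectralNorm_ {m : ℕ} (A : Matrix (Fin m) (Fin m) ℝ) : ℝ :=
  ‖LinearMap.toContinuousLinearMap (Matrix.toEuclideanLin A)‖

/-- `e_j`, the `j`-th standard unit vector of `ℝⁿ`. -/
def unitVec (n : ℕ) (j : Fin n) : Fin n → ℝ := Pi.single j 1

/-- `e_j' = 𝟙 - e_j`. -/
def coVec (n : ℕ) (j : Fin n) : Fin n → ℝ := (fun _ => (1:ℝ)) - Pi.single j 1

/-- The direction `(n-1) e_j' - e_j`. -/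
noncomputable def dirVec (n : ℕ) (j : Fin n) : Fin n → ℝ :=
  ((n:ℝ) - 1) • coVec n j - unitVec n j

/-- `z_{j,k} = (a/2) e_j' + (a + k·a/(4(n-1))) e_j`. -/
noncomputable def zVec (n : ℕ) (a : ℝ) (j : Fin n) (k : ℤ) : Fin n → ℝ :=
  (a/2) • coVec n j + (a + (k:ℝ) * a / (4 * ((n:ℝ) - 1))) • unitVec n j

/-- `d_j = ((2b-a)/a)(n-1) e_j' - (1/2) e_j`. -/
noncomputable def dVec (n : ℕ) (a b : ℝ) (j : Fin n) : Fin n → ℝ :=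
  ((2*b - a)/a * ((n:ℝ) - 1)) • coVec n j - (1/2 : ℝ) • unitVec n j

/-- `K = ⌈4(n-1)b/a⌉ - 4n - 3`. -/
noncomputable def Kbound (n : ℕ) (a b : ℝ) : ℤ := ⌈4 * ((n:ℝ) - 1) * b / a⌉ - 4 * (n:ℤ) - 3

open Matrix
namespace LMaux

variable {m : ℕ} {A B : Matrix (Fin m) (Fin m) ℝ}

lemma herm_of_symm (h : A.IsSymm) : A.IsHermitian :=
  (Matrix.conjTranspose_eq_transpose_of_trivial A).trans h

lemma transpose_eq (hA : A.IsHermitian) : Aᵀ = A :=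
  ((Matrix.conjTranspose_eq_transpose_of_trivial A).symm.trans hA)

lemma eigSet_eq (hA : A.IsHermitian) :
    {r : ℝ | ∃ v : Fin m → ℝ, v ≠ 0 ∧ A.mulVec v = r • v} = Set.range hA.eigenvalues := by
  ext r
  constructor
  · rintro ⟨v, hv, hAv⟩
    by_contra hne
    have hbz : ∀ i, ⇑(hA.eigenvectorBasis i) ⬝ᵥ v = 0 := by
      intro i
      set u : Fin m → ℝ := ⇑(hA.eigenvectorBasis i) with hu
      have h1 : (A.mulVec u) ⬝ᵥ v = hA.eigenvalues i * (u ⬝ᵥ v) := by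
        rw [hu, hA.mulVec_eigenvectorBasis, smul_dotProduct, smul_eq_mul]
      have h2 : (A.mulVec u) ⬝ᵥ v = r * (u ⬝ᵥ v) := by
        conv_lhs => rw [← transpose_eq hA, Matrix.mulVec_transpose]
        rw [← Matrix.dotProduct_mulVec, hAv, dotProduct_smul, smul_eq_mul]
      have h3 : (hA.eigenvalues i - r) * (u ⬝ᵥ v) = 0 := by
        rw [sub_mul, h1.symm.trans h2]; ring
      rcases mul_eq_zero.mp h3 with h | h
      · exact absurd (by linarith [sub_eq_zero.mp h] : hA.eigenvalues i = r) (fun h => hne ⟨i, h⟩)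
      · exact h
    have hrepr : hA.eigenvectorBasis.repr (WithLp.toLp 2 v) = 0 := by
      ext i
      simpa [OrthonormalBasis.repr_apply_apply, PiLp.inner_apply, RCLike.inner_apply,
        dotProduct, mul_comm] using hbz i
    exact hv (by simpa using hA.eigenvectorBasis.repr.map_eq_zero_iff.mp hrepr)
  · rintro ⟨i, rfl⟩
    exact ⟨hA.eigenvectorBasis i, fun h => hA.eigenvectorBasis.orthonormal.ne_zero i (by simpa using h),
      hA.mulVec_eigenvectorBasis i⟩

end LMaux

open Matrix
namespace LMaux

variable {m : ℕ} {A B : Matrix (Fin m) (Fin m) ℝ}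

lemma bddAbove_eigSet (hA : A.IsHermitian) :
    BddAbove {r : ℝ | ∃ v : Fin m → ℝ, v ≠ 0 ∧ A.mulVec v = r • v} := by
  rw [eigSet_eq hA]; exact (Set.finite_range _).bddAbove

lemma le_lambdaMax (hA : A.IsHermitian) {r : ℝ} {v : Fin m → ℝ} (hv : v ≠ 0)
    (h : A.mulVec v = r • v) : r ≤ lambdaMax A :=
  le_csSup (bddAbove_eigSet hA) ⟨v, hv, h⟩

lemma exists_lambdaMax [NeZero m] (hA : A.IsHermitian) :
    ∃ i, lambdaMax A = hA.eigenvalues i := by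
  have h1 : lambdaMax A ∈ Set.range hA.eigenvalues := by
    rw [lambdaMax, eigSet_eq hA]
    exact (Set.range_nonempty _).csSup_mem (Set.finite_range _)
  obtain ⟨i, hi⟩ := h1
  exact ⟨i, hi.symm⟩

lemma psd_of_eig_nonneg (hA : A.IsHermitian)
    (h : ∀ (r : ℝ) (v : Fin m → ℝ), v ≠ 0 → A.mulVec v = r • v → 0 ≤ r) : A.PosSemidef :=
  hA.posSemidef_iff_eigenvalues_nonneg.mpr fun i =>
    h _ _ (fun h => hA.eigenvectorBasis.orthonormal.ne_zero i (by simpa using h)) (hA.mulVec_eigenvectorBasis i)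

lemma smul_one_sub_psd [NeZero m] (hB : B.IsHermitian) :
    (lambdaMax B • (1 : Matrix (Fin m) (Fin m) ℝ) - B).PosSemidef := by
  have hN : (lambdaMax B • (1 : Matrix (Fin m) (Fin m) ℝ) - B).IsHermitian :=
    by
    rw [Matrix.smul_one_eq_diagonal]
    exact (Matrix.isHermitian_diagonal _).sub hB
  refine psd_of_eig_nonneg hN fun r v hv h => ?_
  have hBv : B.mulVec v = (lambdaMax B - r) • v := by
    have := h
    rw [Matrix.sub_mulVec, Matrix.smul_mulVec, Matrix.one_mulVec] at this
    rw [sub_smul]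
    rw [sub_eq_iff_eq_add] at this
    rw [this]; abel
  have := le_lambdaMax hB hv hBv
  linarith

lemma dotProduct_mulVec_le [NeZero m] (hB : B.IsHermitian) (v : Fin m → ℝ) :
    v ⬝ᵥ B.mulVec v ≤ lambdaMax B * (v ⬝ᵥ v) := by
  have h := (smul_one_sub_psd hB).dotProduct_mulVec_nonneg v
  rw [star_trivial, Matrix.sub_mulVec, Matrix.smul_mulVec, Matrix.one_mulVec,
    dotProduct_sub, dotProduct_smul, smul_eq_mul] at h
  linarith

lemma lambdaMax_mono [NeZero m] (hA : A.IsHermitian) (hB : B.IsHermitian)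
    (h : (B - A).PosSemidef) : lambdaMax A ≤ lambdaMax B := by
  obtain ⟨i, hi⟩ := exists_lambdaMax hA
  set v : Fin m → ℝ := ⇑(hA.eigenvectorBasis i) with hvdef
  have hv : v ≠ 0 := fun h => hA.eigenvectorBasis.orthonormal.ne_zero i (by simpa [hvdef] using h)
  have hvv : 0 < v ⬝ᵥ v :=
    lt_of_le_of_ne (Finset.sum_nonneg fun j _ => mul_self_nonneg _)
      (fun h0 => hv (dotProduct_self_eq_zero.mp h0.symm))
  have h1 : v ⬝ᵥ A.mulVec v = hA.eigenvalues i * (v ⬝ᵥ v) := by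
    rw [hvdef, hA.mulVec_eigenvectorBasis, dotProduct_smul, smul_eq_mul]
  have h2 : v ⬝ᵥ A.mulVec v ≤ v ⬝ᵥ B.mulVec v := by
    have := h.dotProduct_mulVec_nonneg v
    rw [star_trivial, Matrix.sub_mulVec, dotProduct_sub] at this
    linarith
  have h3 := dotProduct_mulVec_le hB v
  rw [hi]
  nlinarith

lemma le_lambdaMax_smul [NeZero m] (hA : A.IsHermitian) {c : ℝ} (hcA : (c • A).IsHermitian)
    (hc : 0 ≤ c) : c * lambdaMax A ≤ lambdaMax (c • A) := by
  obtain ⟨i, hi⟩ := exists_lambdaMax hA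
  have hv : ⇑(hA.eigenvectorBasis i) ≠ 0 := fun h => hA.eigenvectorBasis.orthonormal.ne_zero i (by simpa using h)
  have : (c • A).mulVec ⇑(hA.eigenvectorBasis i)
      = (c * hA.eigenvalues i) • ⇑(hA.eigenvectorBasis i) := by
    rw [Matrix.smul_mulVec, hA.mulVec_eigenvectorBasis, smul_smul]
  rw [hi]
  exact le_lambdaMax hcA hv this

lemma lambdaMax_smul [NeZero m] (hA : A.IsHermitian) {c : ℝ} (hcA : (c • A).IsHermitian)
    (hc : 0 < c) : lambdaMax (c • A) = c * lambdaMax A := by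
  refine le_antisymm ?_ (le_lambdaMax_smul hA hcA hc.le)
  have h1 : c⁻¹ * lambdaMax (c • A) ≤ lambdaMax (c⁻¹ • c • A) :=
    le_lambdaMax_smul hcA (by rw [smul_smul, inv_mul_cancel₀ hc.ne', one_smul]; exact hA)
      (inv_nonneg.mpr hc.le)
  rw [smul_smul, inv_mul_cancel₀ hc.ne', one_smul] at h1
  calc lambdaMax (c • A) = c * (c⁻¹ * lambdaMax (c • A)) := by
        field_simp
    _ ≤ c * lambdaMax A := by nlinarith

lemma lambdaMax_pos [NeZero m] (hA : A.IsHermitian) (h : ¬ (-A).PosSemidef) :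
    0 < lambdaMax A := by
  by_contra hle
  push_neg at hle
  refine h (psd_of_eig_nonneg hA.neg fun r v hv hAv => ?_)
  have : A.mulVec v = (-r) • v := by
    rw [Matrix.neg_mulVec] at hAv
    rw [neg_smul, ← hAv, neg_neg]
  linarith [le_lambdaMax hA hv this]

lemma lambdaMax_zero [NeZero m] : lambdaMax (0 : Matrix (Fin m) (Fin m) ℝ) = 0 := by
  have hset : {r : ℝ | ∃ v : Fin m → ℝ, v ≠ 0 ∧ (0 : Matrix (Fin m) (Fin m) ℝ).mulVec v = r • v}
      = {0} := by
    ext r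
    simp only [Set.mem_setOf_eq, Set.mem_singleton_iff, Matrix.zero_mulVec]
    constructor
    · rintro ⟨v, hv, hrv⟩
      rcases (smul_eq_zero.mp hrv.symm) with h | h
      · exact h
      · exact absurd h hv
    · rintro rfl
      refine ⟨fun _ => 1, ?_, by simp⟩
      intro h
      exact one_ne_zero (congrFun h (0 : Fin m))
  rw [lambdaMax, hset, csSup_singleton]

end LMaux

open LMaux

/-- equation (12). Without convexity: if `F'(x)((n-1)e_j' - e_j) ⋠ 0` for
all `j` and `λ := min_j λ_max(F'(x)((n-1)e_j' - e_j))`, then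
`λ_max(F'(x)d) < λ‖d‖_∞/(n-1)` implies `min_j d_j > -(1/(n-1)) max_j d_j`. -/
theorem min_gt_of_lambdaMax_lt {n m : ℕ} (hn : 2 ≤ n) (hm : 2 ≤ m)
    (F : (Fin n → ℝ) → Matrix (Fin m) (Fin m) ℝ)
    (F' : (Fin n → ℝ) → (Fin n → ℝ) →L[ℝ] Matrix (Fin m) (Fin m) ℝ)
    (hF_symm : ∀ x ∈ posOrth n, (F x).IsSymm)
    (hF'_symm : ∀ x ∈ posOrth n, ∀ d : Fin n → ℝ, (F' x d).IsSymm)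
    (hderiv : ∀ x ∈ posOrth n, HasFDerivAt F (F' x) x)
    (hcont : ContinuousOn F' (posOrth n))
    (hmono : ∀ x ∈ posOrth n, ∀ d : Fin n → ℝ, 0 ≤ d → loewnerLE (F' x d) 0)
    (x : Fin n → ℝ) (hx : x ∈ posOrth n)
    (hcrit : ∀ j : Fin n, ¬ loewnerLE (F' x (dirVec n j)) 0)
    (lam : ℝ) (hlam : IsLeast {r : ℝ | ∃ j : Fin n, r = lambdaMax (F' x (dirVec n j))} lam) :
    ∀ d : Fin n → ℝ, lambdaMax (F' x d) < lam * ‖d‖ / ((n:ℝ) - 1) →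
      -(1 / ((n:ℝ) - 1)) * (⨆ j, d j) < ⨅ j, d j := by
  intro d hlt
  haveI : NeZero m := ⟨by omega⟩
  haveI : NeZero n := ⟨by omega⟩
  have hN : (2:ℝ) ≤ (n:ℝ) := by exact_mod_cast hn
  set t : ℝ := (n : ℝ) - 1 with ht
  have htpos : 0 < t := by rw [ht]; linarith
  have ht1 : (1:ℝ) ≤ t := by rw [ht]; linarith
  rcases eq_or_ne d 0 with rfl | hd0
  · exfalso
    rw [map_zero, lambdaMax_zero, norm_zero, mul_zero, zero_div] at hlt
    exact lt_irrefl 0 hlt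
  by_contra hcon
  push_neg at hcon
  obtain ⟨j₀, _, hj₀⟩ := Finset.exists_min_image Finset.univ d ⟨0, Finset.mem_univ _⟩
  have hj₀' : ∀ j, d j₀ ≤ d j := fun j => hj₀ j (Finset.mem_univ j)
  have hiInf : ⨅ j, d j = d j₀ :=
    le_antisymm (ciInf_le (Finite.bddBelow_range d) j₀) (le_ciInf hj₀')
  set M := ⨆ j, d j with hMdef
  have hM : ∀ j, d j ≤ M := fun j => le_ciSup (Finite.bddAbove_range d) j
  set c := -d j₀ with hcdef
  rw [hiInf] at hcon
  have h2 : (1/t) * M ≤ c := by rw [hcdef]; linarith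
  have h1 : M ≤ t * c := by
    have h3 := mul_le_mul_of_nonneg_left h2 htpos.le
    rw [← mul_assoc, mul_one_div_cancel htpos.ne', one_mul] at h3
    exact h3
  have hc0 : 0 ≤ c := by nlinarith [hM j₀]
  have hnorm : ‖d‖ ≤ t * c := by
    refine (pi_norm_le_iff_of_nonneg (by nlinarith)).mpr fun i => ?_
    rw [Real.norm_eq_abs, abs_le]
    exact ⟨by nlinarith [hj₀' i], le_trans (hM i) h1⟩
  have hdn : 0 < ‖d‖ := norm_pos_iff.mpr hd0
  have hcpos : 0 < c := by nlinarith
  set w : Fin n → ℝ := c • dirVec n j₀ - d with hwdef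
  have hval : ∀ i, dirVec n j₀ i = if i = j₀ then -1 else t := by
    intro i
    by_cases hij : i = j₀
    · subst hij
      simp [dirVec, coVec, unitVec, Pi.single_eq_same, ht]
    · simp [dirVec, coVec, unitVec, Pi.single_eq_of_ne hij, ht, hij]
  have hw : 0 ≤ w := by
    refine Pi.le_def.mpr fun i => ?_
    have hwi : w i = c * dirVec n j₀ i - d i := by
      rw [hwdef]; simp [Pi.sub_apply, Pi.smul_apply, smul_eq_mul]
    rw [Pi.zero_apply, hwi, hval i]
    by_cases hij : i = j₀
    · subst hij; simp; linarith
    · rw [if_neg hij]; nlinarith [hM i]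
  have hloew : (F' x d - F' x (c • dirVec n j₀)).PosSemidef := by
    have hmw := hmono x hx w hw
    rw [loewnerLE, zero_sub] at hmw
    have hdw : d - c • dirVec n j₀ = -w := by rw [hwdef]; abel
    rw [← map_sub, hdw, map_neg]
    exact hmw
  have hherm_d : (F' x d).IsHermitian := herm_of_symm (hF'_symm x hx d)
  have hherm_cdir : (F' x (c • dirVec n j₀)).IsHermitian := herm_of_symm (hF'_symm x hx _)
  have hmonoLM : lambdaMax (F' x (c • dirVec n j₀)) ≤ lambdaMax (F' x d) :=
    lambdaMax_mono hherm_cdir hherm_d hloew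
  have heq : lambdaMax (F' x (c • dirVec n j₀)) = c * lambdaMax (F' x (dirVec n j₀)) := by
    have h' : (c • F' x (dirVec n j₀)).IsHermitian := by
      rw [← _root_.map_smul]; exact hherm_cdir
    rw [_root_.map_smul (F' x) c (dirVec n j₀)]
    exact lambdaMax_smul (herm_of_symm (hF'_symm x hx _)) h' hcpos
  have hlam_le : lam ≤ lambdaMax (F' x (dirVec n j₀)) := hlam.2 ⟨j₀, rfl⟩
  have hlam_pos : 0 < lam := by
    obtain ⟨j₁, hj₁⟩ := hlam.1
    rw [hj₁]
    refine lambdaMax_pos (herm_of_symm (hF'_symm x hx _)) fun hps => hcrit j₁ ?_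
    rw [loewnerLE, zero_sub]
    exact hps
  have hfin1 : lam * ‖d‖ / t ≤ lam * c := by
    rw [div_le_iff₀ htpos]
    nlinarith
  nlinarith [mul_le_mul_of_nonneg_left hlam_le hcpos.le]


end
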